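/- Fix δ with 0 < δ < ρ − L and suppose that in Algorithm niAPG every inexact proximal step satisfies F(x_{k+1}) ≤ F(v_k) − (δ/2)·‖x_{k+1} − v_k‖² for all k ≥ 1, and that F is bounded below. Let c₁ = max_{t = 1,…,q+1} F(x_t) − inf F and write a_t = ‖x_{t+1} − v_t‖². Then: (i) lim_{k→∞} min_{t ∈ W(k)} a_t = 0; and (ii) for every K ≥ 1, min_{k = 1,…,K} min_{t ∈ W(k)} a_t ≤ 2·(q+1)·c₁ / (δ·K). -/

import Mathlib

open Filter

/-- Proposition 10: `O(1/K)` rate for nonconvex inexact niAPG.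
If every inexact proximal step satisfies `F x_{k+1} ≤ F v_k − (δ/2)‖x_{k+1} − v_k‖²` with
`0 < δ < ρ − L`, and `F` is bounded below, then with
`c₁ = max_{t=1,…,q+1} F(x_t) − inf F`, `a_t = ‖x_{t+1} − v_t‖²` and
`m j = min_{t ∈ W(j+1)} a_t` (where `W(k) = {max(1, k−q),…,k}`), we have `m j → 0` and,
for every `K ≥ 1`, `min_{k=1,…,K} (min_{t ∈ W(k)} a_t) ≤ 2(q+1)c₁ / (δ K)`. -/
theorem niAPG_nonconvex_rate
    {E : Type*} [NormedAddCommGroup E] [InnerProductSpace ℝ E] [FiniteDimensional ℝ E]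
    (f g F : E → ℝ) (f' : E → E) (L η ρ δ : ℝ)
    (hL : 0 < L)
    (hf : ∀ x, HasGradientAt f (f' x) x)
    (hlip : ∀ x y, ‖f' x - f' y‖ ≤ L * ‖x - y‖)
    (hg : LowerSemicontinuous g)
    (hF : ∀ x, F x = f x + g x)
    (hbdd : BddBelow (Set.range F))
    (hη : 0 < η) (hηL : η < 1 / L) (hρ : ρ = 1 / η)
    (hδ : 0 < δ) (hδρ : δ < ρ - L)
    (q : ℕ) (x y v z : ℕ → E) (Δ : ℕ → ℝ)
    (hx01 : x 0 = x 1)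
    (hy : ∀ k, 1 ≤ k → y k = x k + ((((k : ℝ) - 1) / ((k : ℝ) + 2)) • (x k - x (k - 1))))
    (hΔ : ∀ k, ∀ hk : 1 ≤ k, Δ k =
      (Finset.Icc (max 1 (k - q)) k).sup' (Finset.nonempty_Icc.mpr (by omega))
        (fun t => F (x t)))
    (hv : ∀ k, 1 ≤ k → v k = if F (y k) ≤ Δ k then y k else x k)
    (hz : ∀ k, 1 ≤ k → z k = v k - η • f' (v k))
    (hdec : ∀ k, 1 ≤ k →
      F (x (k + 1)) ≤ F (v k) - (δ / 2) * ‖x (k + 1) - v k‖ ^ 2)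
    (c₁ : ℝ)
    (hc₁ : c₁ = (Finset.Icc 1 (q + 1)).sup' (Finset.nonempty_Icc.mpr (by omega))
      (fun t => F (x t)) - sInf (Set.range F))
    -- `m j` is `min_{t ∈ W(j+1)} ‖x_{t+1} − v_t‖²`
    (m : ℕ → ℝ)
    (hm : ∀ j : ℕ, m j = (Finset.Icc (max 1 (j + 1 - q)) (j + 1)).inf'
      (Finset.nonempty_Icc.mpr (by omega)) (fun t => ‖x (t + 1) - v t‖ ^ 2)) :
    Tendsto m atTop (nhds 0) ∧
    ∀ K : ℕ, ∀ hK : 1 ≤ K,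
      (Finset.range K).inf' (Finset.nonempty_range_iff.mpr (by omega)) m ≤
        2 * ((q : ℝ) + 1) * c₁ / (δ * (K : ℝ)) := by
  classical
  have hI : ∀ u, sInf (Set.range F) ≤ F u := fun u => csInf_le hbdd ⟨u, rfl⟩
  have hFvΔ : ∀ k, 1 ≤ k → F (v k) ≤ Δ k := by
    intro k hk
    rw [hv k hk]
    split_ifs with h
    · exact h
    · rw [hΔ k hk]
      exact Finset.le_sup' (fun t => F (x t)) (Finset.mem_Icc.mpr ⟨by omega, le_rfl⟩)
  have hstep : ∀ k, 1 ≤ k → F (x (k + 1)) ≤ Δ k - δ / 2 * ‖x (k + 1) - v k‖ ^ 2 := by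
    intro k hk
    have h1 := hdec k hk
    have h2 := hFvΔ k hk
    linarith
  have hΔI : ∀ k, 1 ≤ k → sInf (Set.range F) ≤ Δ k := by
    intro k hk
    refine le_trans (hI (x k)) ?_
    rw [hΔ k hk]
    exact Finset.le_sup' (fun t => F (x t)) (Finset.mem_Icc.mpr ⟨by omega, le_rfl⟩)
  have hmono : ∀ k, 1 ≤ k → Δ (k + 1) ≤ Δ k := by
    intro k hk
    rw [hΔ (k + 1) (by omega)]
    apply Finset.sup'_le
    intro s hs
    rw [Finset.mem_Icc] at hs
    by_cases hsk : s ≤ k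
    · rw [hΔ k hk]
      exact Finset.le_sup' (fun t => F (x t)) (Finset.mem_Icc.mpr ⟨by omega, hsk⟩)
    · have hse : s = k + 1 := by omega
      subst hse
      have h1 := hstep k hk
      have h2 : (0:ℝ) ≤ δ / 2 * ‖x (k + 1) - v k‖ ^ 2 :=
        mul_nonneg (by linarith) (sq_nonneg _)
      linarith
  have hmono' : ∀ k, 1 ≤ k → ∀ j, k ≤ j → Δ j ≤ Δ k := by
    intro k hk j hkj
    induction j with
    | zero => omega
    | succ n ih =>
      rcases Nat.lt_or_ge k (n + 1) with h | h
      · exact le_trans (hmono n (by omega)) (ih (by omega))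
      · have : k = n + 1 := by omega
        rw [this]
  have hm_nonneg : ∀ j, 0 ≤ m j := by
    intro j
    rw [hm j]
    apply Finset.le_inf'
    intro t ht
    positivity
  have hblock : ∀ k, 1 ≤ k → Δ (k + q + 1) ≤ Δ k - δ / 2 * m (k + q - 1) := by
    intro k hk
    rw [hΔ (k + q + 1) (by omega)]
    apply Finset.sup'_le
    intro s hs
    rw [Finset.mem_Icc] at hs
    obtain ⟨t, rfl⟩ : ∃ t, s = t + 1 := ⟨s - 1, by omega⟩
    have h1 := hstep t (by omega)
    have h2 : Δ t ≤ Δ k := hmono' k hk t (by omega)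
    have h3 : m (k + q - 1) ≤ ‖x (t + 1) - v t‖ ^ 2 := by
      rw [hm (k + q - 1)]
      exact Finset.inf'_le _ (Finset.mem_Icc.mpr ⟨by omega, by omega⟩)
    have h4 : δ / 2 * m (k + q - 1) ≤ δ / 2 * ‖x (t + 1) - v t‖ ^ 2 :=
      mul_le_mul_of_nonneg_left h3 (by linarith)
    linarith
  constructor
  · -- part (i)
    set D : ℕ → ℝ := fun n => Δ (n + 1) with hDdef
    have hDanti : Antitone D := antitone_nat_of_succ_le (fun n => hmono (n + 1) (by omega))
    have hDbdd : BddBelow (Set.range D) :=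
      ⟨sInf (Set.range F), by rintro _ ⟨n, rfl⟩; exact hΔI (n + 1) (by omega)⟩
    have hDtend := tendsto_atTop_ciInf hDanti hDbdd
    have h3 : Tendsto (fun j => 2 / δ * (D (j - q) - D (j + 1))) atTop (nhds 0) := by
      have h1 : Tendsto (fun j : ℕ => D (j - q)) atTop (nhds (⨅ n, D n)) :=
        hDtend.comp (tendsto_sub_atTop_nat q)
      have h2 : Tendsto (fun j : ℕ => D (j + 1)) atTop (nhds (⨅ n, D n)) :=
        hDtend.comp (tendsto_add_atTop_nat 1)
      have h4 := (h1.sub h2).const_mul (2 / δ)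
      simpa using h4
    refine squeeze_zero' (Eventually.of_forall hm_nonneg) ?_ h3
    filter_upwards [eventually_ge_atTop q] with j hj
    have hb := hblock (j - q + 1) (by omega)
    rw [show j - q + 1 + q + 1 = j + 2 by omega, show j - q + 1 + q - 1 = j by omega] at hb
    have hD1 : D (j - q) = Δ (j - q + 1) := rfl
    have hD2 : D (j + 1) = Δ (j + 2) := rfl
    rw [hD1, hD2]
    have hδ' : δ ≠ 0 := ne_of_gt hδ
    have h5 : 2 / δ * (δ / 2 * m j) ≤ 2 / δ * (Δ (j - q + 1) - Δ (j + 2)) :=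
      mul_le_mul_of_nonneg_left (by linarith) (div_nonneg (by norm_num) hδ.le)
    have h6 : 2 / δ * (δ / 2 * m j) = m j := by field_simp
    linarith
  · -- part (ii)
    intro K hK
    obtain ⟨μ, hμdef⟩ : ∃ μ : ℝ,
        μ = (Finset.range K).inf' (Finset.nonempty_range_iff.mpr (by omega)) m := ⟨_, rfl⟩
    have hμ0 : 0 ≤ μ := by
      rw [hμdef]
      exact Finset.le_inf' _ _ (fun j _ => hm_nonneg j)
    have hμle : ∀ t, 1 ≤ t → t ≤ K → μ ≤ ‖x (t + 1) - v t‖ ^ 2 := by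
      intro t ht htK
      have h1 : μ ≤ m (t - 1) := by
        rw [hμdef]
        exact Finset.inf'_le m (Finset.mem_range.mpr (by omega))
      have h2 : m (t - 1) ≤ ‖x (t + 1) - v t‖ ^ 2 := by
        rw [hm (t - 1)]
        exact Finset.inf'_le _ (Finset.mem_Icc.mpr ⟨by omega, by omega⟩)
      linarith
    obtain ⟨g', hgdef⟩ : ∃ g' : ℝ, g' = δ * μ / (2 * ((q : ℝ) + 1)) := ⟨_, rfl⟩
    have hq1 : (0:ℝ) < (q : ℝ) + 1 := by positivity
    have hg0 : 0 ≤ g' := by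
      rw [hgdef]
      exact div_nonneg (mul_nonneg hδ.le hμ0) (by positivity)
    obtain ⟨Φ, hΦdef⟩ : ∃ Φ : ℕ → ℝ, Φ = fun t =>
        (Finset.Icc (max 1 (t - q)) (max 1 t)).sup'
          (Finset.nonempty_Icc.mpr (by omega))
          (fun s => F (x s) + ((q : ℝ) - ((t - s : ℕ) : ℝ)) * g') := ⟨_, rfl⟩
    have hΦub : ∀ t s, 1 ≤ s → s ≤ t → t ≤ s + q →
        F (x s) + ((q : ℝ) - ((t - s : ℕ) : ℝ)) * g' ≤ Φ t := by
      intro t s h1 h2 h3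
      simp only [hΦdef]
      have hmem : s ∈ Finset.Icc (max 1 (t - q)) (max 1 t) := by
        rw [Finset.mem_Icc]
        omega
      exact Finset.le_sup' (fun s => F (x s) + ((q : ℝ) - ((t - s : ℕ) : ℝ)) * g') hmem
    have hΦlub : ∀ t b, 1 ≤ t →
        (∀ s, 1 ≤ s → s ≤ t → t ≤ s + q →
          F (x s) + ((q : ℝ) - ((t - s : ℕ) : ℝ)) * g' ≤ b) → Φ t ≤ b := by
      intro t b ht hb
      simp only [hΦdef]
      apply Finset.sup'_le
      intro s hs
      rw [Finset.mem_Icc] at hs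
      exact hb s (by omega) (by omega) (by omega)
    have hΔΦ : ∀ k, 1 ≤ k → Δ k ≤ Φ k := by
      intro k hk
      rw [hΔ k hk]
      apply Finset.sup'_le
      intro s hs
      rw [Finset.mem_Icc] at hs
      have h1 : F (x s) + ((q : ℝ) - ((k - s : ℕ) : ℝ)) * g' ≤ Φ k :=
        hΦub k s (by omega) (by omega) (by omega)
      have h2 : ((k - s : ℕ) : ℝ) ≤ (q : ℝ) := by
        exact_mod_cast Nat.cast_le.mpr (show k - s ≤ q by omega)
      have hw : 0 ≤ ((q : ℝ) - ((k - s : ℕ) : ℝ)) * g' :=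
        mul_nonneg (by linarith) hg0
      linarith
    have hstepΦ : ∀ k, 1 ≤ k → k ≤ K → Φ (k + 1) ≤ Φ k - g' := by
      intro k hk hkK
      apply hΦlub (k + 1) _ (by omega)
      intro s hs1 hs2 hs3
      by_cases hsk : s ≤ k
      · have h1 := hΦub k s hs1 hsk (by omega)
        rw [show k + 1 - s = (k - s) + 1 by omega]
        push_cast
        linarith
      · have hse : s = k + 1 := by omega
        subst hse
        rw [Nat.sub_self]
        push_cast
        have h1 := hstep k hk
        have h2 := hμle k hk hkK
        have h3 := hΔΦ k hk
        have h4 : ((q : ℝ) + 1) * g' = δ / 2 * μ := by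
          rw [hgdef]
          field_simp
        have h5 : δ / 2 * μ ≤ δ / 2 * ‖x (k + 1) - v k‖ ^ 2 :=
          mul_le_mul_of_nonneg_left h2 (by linarith)
        linarith
    have hchain : ∀ n, n ≤ K → Φ (1 + n) ≤ Φ 1 - (n : ℝ) * g' := by
      intro n
      induction n with
      | zero => intro _; simp
      | succ p ih =>
        intro hpK
        have h1 := hstepΦ (1 + p) (by omega) (by omega)
        have h2 := ih (by omega)
        rw [show 1 + (p + 1) = (1 + p) + 1 by omega]
        push_cast
        linarith
    have hΦ1le : Φ 1 ≤ F (x 1) + (q : ℝ) * g' := by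
      apply hΦlub 1 _ le_rfl
      intro s hs1 hs2 hs3
      have hse : s = 1 := by omega
      subst hse
      rw [Nat.sub_self]
      push_cast
      linarith
    have hlow : F (x (K + 1)) + ((q : ℝ) - ((K + 1 - (K + 1) : ℕ) : ℝ)) * g' ≤ Φ (K + 1) :=
      hΦub (K + 1) (K + 1) (by omega) le_rfl (by omega)
    rw [Nat.sub_self] at hlow
    push_cast at hlow
    have hc1 : F (x 1) ≤ c₁ + sInf (Set.range F) := by
      rw [hc₁]
      have h1 : F (x 1) ≤ (Finset.Icc 1 (q + 1)).sup'
          (Finset.nonempty_Icc.mpr (by omega)) (fun t => F (x t)) :=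
        Finset.le_sup' (fun t => F (x t)) (Finset.mem_Icc.mpr ⟨le_rfl, by omega⟩)
      linarith
    have hchainK := hchain K le_rfl
    rw [show 1 + K = K + 1 by omega] at hchainK
    have hIK := hI (x (K + 1))
    have hfin : (K : ℝ) * g' ≤ c₁ := by linarith
    have hKpos : (0:ℝ) < (K : ℝ) := by exact_mod_cast Nat.pos_of_ne_zero (by omega)
    have final : μ ≤ 2 * ((q : ℝ) + 1) * c₁ / (δ * (K : ℝ)) := by
      rw [le_div_iff₀ (mul_pos hδ hKpos)]
      have h1 : (K : ℝ) * (δ * μ / (2 * ((q : ℝ) + 1))) ≤ c₁ := by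
        rw [← hgdef]; exact hfin
      have h2 : μ * (δ * (K : ℝ)) =
          (K : ℝ) * (δ * μ / (2 * ((q : ℝ) + 1))) * (2 * ((q : ℝ) + 1)) := by
        field_simp
      calc μ * (δ * (K : ℝ))
          = (K : ℝ) * (δ * μ / (2 * ((q : ℝ) + 1))) * (2 * ((q : ℝ) + 1)) := h2
        _ ≤ c₁ * (2 * ((q : ℝ) + 1)) := mul_le_mul_of_nonneg_right h1 (by positivity)
        _ = 2 * ((q : ℝ) + 1) * c₁ := by ring
    rw [hμdef] at final
    exact final
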